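/- On ℝ with f(x) = -x²/2 (which is (2,-2)-convex), the curve u(t) = e^t is a 2-curve of maximal slope starting from 1 on [0,∞), and for p' ∈ (1,2) with α = 1 - q'/p' < 0 (q' conjugate to p'), the transformed curve u_{p'}(s) = (1 + αs)^{1/α} is a p'-curve of maximal slope starting from 1 whose maximal interval of existence is [0, -1/α); in particular u_{p'} blows up in finite time (d(u_{p'}(s), u_{p'}(0)) → +∞ as s ↑ -1/α) and cannot be extended to a p'-curve of maximal slope on [0,∞). -/

import Mathlib

open Filter MeasureTheory Set Topology ENNReal NNReal

noncomputable section

variable {S : Type*} [MetricSpace S]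

/-- The metric derivative of a curve `u` at time `t` is `m`. -/
def HasMetricDerivAt (u : ℝ → S) (t m : ℝ) : Prop :=
  Tendsto (fun s => dist (u s) (u t) / |s - t|) (𝓝[≠] t) (𝓝 m)

/-- `v` is an absolutely continuous curve on `I` with (a.e.) metric derivative `dv`,
integrable on `I`, controlling distances. -/
def IsACCurveOn (v : ℝ → S) (I : Set ℝ) (dv : ℝ → ℝ) : Prop :=
  (∀ t ∈ I, 0 ≤ dv t) ∧ IntegrableOn dv I ∧
  (∀ s ∈ I, ∀ t ∈ I, s ≤ t → dist (v s) (v t) ≤ ∫ r in s..t, dv r) ∧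
  (∀ᵐ t ∂(volume.restrict I), HasMetricDerivAt v t (dv t))

/-- The local (descending) slope `|∂⁻ f|`, valued in `ℝ≥0∞`. -/
def slope' (f : S → EReal) (v : S) : ℝ≥0∞ :=
  if f v = ⊤ then ⊤
  else Filter.limsup (fun w => ENNReal.ofReal ((f v - f w).toReal) / edist v w) (𝓝[≠] v)

/-- `g` is a strong upper gradient for `f`. -/
def StrongUpperGradient (f : S → EReal) (g : S → ℝ≥0∞) : Prop :=
  ∀ (I : Set ℝ) (v : ℝ → S) (dv : ℝ → ℝ), IsACCurveOn v I dv →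
    (∀ t ∈ I, f (v t) ≠ ⊤) →
    AEMeasurable (fun t => g (v t)) (volume.restrict I) ∧
    ∀ s ∈ I, ∀ t ∈ I, s ≤ t →
      ENNReal.ofReal |(f (v t)).toReal - (f (v s)).toReal| ≤
        ∫⁻ r in Set.Ioc s t, g (v r) * ENNReal.ofReal (dv r)

/-- The interval `[0, a)` (with `a ∈ (0, ∞]`) as a subset of `ℝ`. -/
def Icoe (a : ℝ≥0∞) : Set ℝ := {t : ℝ | 0 ≤ t ∧ ENNReal.ofReal t < a}

/-- `u` is a `p`-curve of maximal slope for `f` on `[0,a)` starting from `u₀`,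
with metric derivative `du` and non-increasing a.e. representative `φ` of `f ∘ u`. -/
structure IsCMS (f : S → EReal) (p q : ℝ) (a : ℝ≥0∞) (u₀ : S)
    (u : ℝ → S) (du : ℝ → ℝ) (φ : ℝ → ℝ) : Prop where
  init : u 0 = u₀
  dom : f u₀ ≠ ⊤
  ac : ∀ T : ℝ, Set.Icc 0 T ⊆ Icoe a → IsACCurveOn u (Set.Icc 0 T) du
  anti : AntitoneOn φ (Icoe a)
  eq_ae : ∀ᵐ t ∂(volume.restrict (Icoe a)), (φ t : EReal) = f (u t)
  ineq : ∀ᵐ t ∂(volume.restrict (Icoe a)), ∃ φ' : ℝ,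
    HasDerivWithinAt φ φ' (Icoe a) t ∧
    (φ' : EReal) ≤ -(((1/p) * du t ^ p : ℝ) : EReal)
      - (((1/q : ℝ)) : EReal) * ((slope' f (u t) ^ q : ℝ≥0∞) : EReal)

/-- `f` is `(p, λ)`-convex. -/
def PLConvex (f : S → EReal) (p lam : ℝ) : Prop :=
  ∃ ψ : ℝ → ℝ, (∀ t ∈ Set.Icc (0:ℝ) 1, ψ t ∈ Set.Icc (0:ℝ) 1) ∧
    Tendsto ψ (𝓝[>] (0:ℝ)) (𝓝 0) ∧ (∃ t ∈ Set.Ioo (0:ℝ) 1, ψ t < 1) ∧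
    ∀ v₀ v₁ : S, ∃ γ : ℝ → S, ContinuousOn γ (Set.Icc 0 1) ∧ γ 0 = v₀ ∧ γ 1 = v₁ ∧
      (∀ t ∈ Set.Icc (0:ℝ) 1, dist (γ t) (γ 0) ≤ t * dist (γ 1) (γ 0)) ∧
      (∀ t ∈ Set.Icc (0:ℝ) 1,
        f (γ t) ≤ ((1 - t : ℝ) : EReal) * f (γ 0) + ((t : ℝ) : EReal) * f (γ 1)
          - ((lam * t * (1 - ψ t) * dist (γ 0) (γ 1) ^ p : ℝ) : EReal))

/-- The supremum of times at which the slope along `u` is positive. -/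
def tstar (f : S → EReal) (u : ℝ → S) (a : ℝ≥0∞) : ℝ≥0∞ :=
  ⨆ t ∈ {t | t ∈ Icoe a ∧ 0 < slope' f (u t)}, ENNReal.ofReal t

namespace Stmt16Aux

lemma icoe_top : Icoe ⊤ = Set.Ici 0 := by
  ext t; simp [Icoe]

lemma icoe_ofReal {β : ℝ} (hβ : 0 < β) : Icoe (ENNReal.ofReal β) = Set.Ico 0 β := by
  ext t
  simp only [Icoe, Set.mem_setOf_eq, Set.mem_Ico]
  constructor
  · rintro ⟨h1, h2⟩
    exact ⟨h1, by rwa [ENNReal.ofReal_lt_ofReal_iff hβ] at h2⟩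
  · rintro ⟨h1, h2⟩
    exact ⟨h1, by rwa [ENNReal.ofReal_lt_ofReal_iff hβ]⟩

lemma slope'_le (v : ℝ) :
    slope' (fun x : ℝ => ((-(x ^ 2) / 2 : ℝ) : EReal)) v ≤ ENNReal.ofReal |v| := by
  rw [slope', if_neg (by simp)]
  have hv : |v + v| / 2 = |v| := by
    rw [show v + v = 2 * v by ring, abs_mul]; norm_num
  have h1 : Tendsto (fun w : ℝ => ENNReal.ofReal (|w + v| / 2)) (𝓝[≠] v)
      (𝓝 (ENNReal.ofReal |v|)) := by
    have hc : Tendsto (fun w : ℝ => |w + v| / 2) (𝓝 v) (𝓝 (|v + v| / 2)) := by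
      exact ((continuous_abs.comp (continuous_id.add continuous_const)).div_const 2).tendsto v
    have := (ENNReal.continuous_ofReal.tendsto _).comp hc
    rw [hv] at this
    exact this.mono_left nhdsWithin_le_nhds
  refine le_trans (Filter.limsup_le_limsup ?_) (le_of_eq h1.limsup_eq)
  filter_upwards [self_mem_nhdsWithin] with w hw
  have hne : v ≠ w := fun h => hw (h ▸ rfl)
  have hpos : 0 < |v - w| := abs_pos.2 (sub_ne_zero.2 hne)
  rw [← EReal.coe_sub, EReal.toReal_coe, edist_dist, Real.dist_eq,
    ← ENNReal.ofReal_div_of_pos hpos]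
  apply ENNReal.ofReal_le_ofReal
  rw [div_le_iff₀ hpos]
  have h2 : |w ^ 2 - v ^ 2| = |w + v| * |v - w| := by
    rw [abs_sub_comm v w, ← abs_mul]; congr 1; ring
  calc -(v ^ 2) / 2 - -(w ^ 2) / 2 = (w ^ 2 - v ^ 2) / 2 := by ring
    _ ≤ |w ^ 2 - v ^ 2| / 2 := by gcongr; exact le_abs_self _
    _ = |w + v| / 2 * |v - w| := by rw [h2]; ring

lemma ereal_helper {c r b x : ℝ} {A : ℝ≥0∞} (hr : 0 ≤ r) (hb : 0 ≤ b)
    (hA : A ≤ ENNReal.ofReal b) (h : x ≤ -c - r * b) :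
    (x : EReal) ≤ -((c : ℝ) : EReal) - ((r : ℝ) : EReal) * (A : EReal) := by
  have hAtop : A ≠ ⊤ := (hA.trans_lt ENNReal.ofReal_lt_top).ne
  have hco : (A : EReal) = ((A.toReal : ℝ) : EReal) := by
    have h1 := EReal.coe_toReal (x := (A : EReal))
      (by simpa [EReal.coe_ennreal_eq_top_iff] using hAtop) (by simp)
    rw [EReal.toReal_coe_ennreal] at h1
    exact h1.symm
  rw [hco, ← EReal.coe_mul, ← EReal.coe_neg, ← EReal.coe_sub, EReal.coe_le_coe_iff]
  have hab : A.toReal ≤ b := ENNReal.toReal_le_of_le_ofReal hb hA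
  nlinarith [mul_le_mul_of_nonneg_left hab hr]

lemma hasMetricDerivAt_of_deriv {u : ℝ → ℝ} {t m : ℝ} (h : HasDerivAt u m t) :
    HasMetricDerivAt u t |m| := by
  have h1 := (hasDerivAt_iff_tendsto_slope.mp h).abs
  refine h1.congr fun s => ?_
  rw [slope_def_field, abs_div, Real.dist_eq]

lemma hasDerivAt_rpow_aff (α e s : ℝ) (hx : 0 < 1 + α * s) :
    HasDerivAt (fun s => (1 + α * s) ^ e) (α * e * (1 + α * s) ^ (e - 1)) s := by
  have h : HasDerivAt (fun s : ℝ => 1 + α * s) α s := by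
    simpa using ((hasDerivAt_id s).const_mul α).const_add 1
  have h2 := h.rpow_const (p := e) (Or.inl hx.ne')
  convert h2 using 1

lemma tendsto_up {α : ℝ} (hα : α < 0) :
    Tendsto (fun s => (1 + α * s) ^ (1 / α)) (𝓝[<] (-1 / α)) atTop := by
  have hαn : α ≠ 0 := hα.ne
  have hval : 1 + α * (-1 / α) = 0 := by field_simp; norm_num
  have h1 : Tendsto (fun s => 1 + α * s) (𝓝[<] (-1 / α)) (𝓝[>] 0) := by
    apply tendsto_nhdsWithin_of_tendsto_nhds_of_eventually_within
    · have hc : Tendsto (fun s : ℝ => 1 + α * s) (𝓝 (-1 / α)) (𝓝 (1 + α * (-1 / α))) :=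
        (continuous_const.add (continuous_const.mul continuous_id)).tendsto _
      rw [hval] at hc
      exact hc.mono_left nhdsWithin_le_nhds
    · filter_upwards [self_mem_nhdsWithin] with s hs
      have h2 : α * (-1 / α) < α * s := mul_lt_mul_of_neg_left hs hα
      have : (0:ℝ) < 1 + α * s := by linarith
      exact this
  have hpow : 0 < -(1 / α) := by
    have : 1 / α < 0 := one_div_neg.2 hα
    linarith
  have h2 : Tendsto (fun x : ℝ => x ^ (1 / α)) (𝓝[>] 0) atTop := by
    have h3 : Tendsto (fun x : ℝ => (x⁻¹) ^ (-(1 / α))) (𝓝[>] 0) atTop :=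
      (_root_.tendsto_rpow_atTop hpow).comp tendsto_inv_nhdsGT_zero
    refine h3.congr' ?_
    filter_upwards [self_mem_nhdsWithin] with x hx
    rw [Real.inv_rpow (le_of_lt hx), ← Real.rpow_neg (le_of_lt hx), neg_neg]
  exact h2.comp h1

lemma plconvex : PLConvex (fun x : ℝ => ((-(x ^ 2) / 2 : ℝ) : EReal)) 2 (-2) := by
  refine ⟨fun _ => 0, fun t ht => by norm_num, tendsto_const_nhds,
    ⟨1/2, by norm_num, by norm_num⟩, ?_⟩
  intro v₀ v₁
  refine ⟨fun t => (1 - t) * v₀ + t * v₁, (by fun_prop : Continuous _).continuousOn,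
    by norm_num, by norm_num, ?_, ?_⟩
  · intro t ht
    have e0 : (1 - (0:ℝ)) * v₀ + 0 * v₁ = v₀ := by norm_num
    have e1 : (1 - (1:ℝ)) * v₀ + 1 * v₁ = v₁ := by norm_num
    simp only [e0, e1]
    rw [Real.dist_eq, Real.dist_eq,
      show (1 - t) * v₀ + t * v₁ - v₀ = t * (v₁ - v₀) by ring,
      abs_mul, abs_of_nonneg ht.1]
  · intro t ht
    have e0 : (1 - (0:ℝ)) * v₀ + 0 * v₁ = v₀ := by norm_num
    have e1 : (1 - (1:ℝ)) * v₀ + 1 * v₁ = v₁ := by norm_num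
    simp only [e0, e1]
    have hd : dist v₀ v₁ ^ (2:ℝ) = dist v₀ v₁ ^ (2:ℕ) := by
      rw [← Real.rpow_natCast]; norm_num
    rw [hd, ← EReal.coe_mul, ← EReal.coe_mul, ← EReal.coe_add, ← EReal.coe_sub,
      EReal.coe_le_coe_iff, Real.dist_eq, sq_abs]
    nlinarith [ht.1, ht.2, mul_nonneg ht.1 (sq_nonneg (v₀ - v₁)),
      mul_nonneg (mul_nonneg ht.1 ht.1) (sq_nonneg (v₀ - v₁))]

open intervalIntegral in
lemma exp_cms : IsCMS (fun x : ℝ => ((-(x ^ 2) / 2 : ℝ) : EReal)) 2 2 ⊤ 1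
    (fun t => Real.exp t) (fun t => Real.exp t) (fun t => -(Real.exp t ^ 2) / 2) := by
  constructor
  · simp
  · simp
  · intro T _
    refine ⟨fun t _ => (Real.exp_pos t).le, Real.continuous_exp.integrableOn_Icc, ?_, ?_⟩
    · intro s hs t ht hst
      show dist (Real.exp s) (Real.exp t) ≤ ∫ r in s..t, Real.exp r
      rw [Real.dist_eq, integral_exp,
        abs_of_nonpos (sub_nonpos.2 (Real.exp_le_exp.2 hst))]
      linarith
    · refine Eventually.of_forall fun t => ?_
      have h := hasMetricDerivAt_of_deriv (Real.hasDerivAt_exp t)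
      rwa [abs_of_pos (Real.exp_pos t)] at h
  · rw [icoe_top]
    intro s _ t _ hst
    have h1 := Real.exp_le_exp.2 hst
    have h2 := Real.exp_pos s
    simp only
    nlinarith
  · exact Eventually.of_forall fun t => rfl
  · refine Eventually.of_forall fun t => ?_
    refine ⟨-(Real.exp t ^ 2), ?_, ?_⟩
    · have h := (((Real.hasDerivAt_exp t).pow 2).neg.div_const 2).hasDerivWithinAt
        (s := Icoe ⊤)
      refine h.congr_deriv ?_
      push_cast
      ring
    · have hb2 : Real.exp t ^ (2:ℝ) = Real.exp t ^ (2:ℕ) := by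
        rw [← Real.rpow_natCast]; norm_num
      have hA : slope' (fun x : ℝ => ((-(x ^ 2) / 2 : ℝ) : EReal)) (Real.exp t) ^ (2:ℝ)
          ≤ ENNReal.ofReal (Real.exp t ^ (2:ℕ)) := by
        have h0 := slope'_le (Real.exp t)
        rw [abs_of_pos (Real.exp_pos t)] at h0
        calc slope' (fun x : ℝ => ((-(x ^ 2) / 2 : ℝ) : EReal)) (Real.exp t) ^ (2:ℝ)
            ≤ (ENNReal.ofReal (Real.exp t)) ^ (2:ℝ) := ENNReal.rpow_le_rpow h0 (by norm_num)
          _ = ENNReal.ofReal (Real.exp t ^ (2:ℝ)) :=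
              ENNReal.ofReal_rpow_of_pos (Real.exp_pos t)
          _ = _ := by rw [hb2]
      refine ereal_helper (by norm_num) (by positivity) hA ?_
      rw [hb2]
      norm_num
      linarith

section Case3

variable {p' q' : ℝ} (hp1 : 1 < p') (hp2 : p' < 2) (hpq : 1 / p' + 1 / q' = 1)

include hp1 hp2 hpq in
lemma basic_facts : 0 < p' ∧ 0 < q' ∧ 2 < q' ∧ 1 - q' / p' < 0 ∧
    q' + p' = p' * q' ∧ (1 - (1 - q' / p')) * p' = q' ∧ 2 - (1 - q' / p') = q' := by
  have hp0 : 0 < p' := lt_trans one_pos hp1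
  have hq'0 : q' ≠ 0 := by
    intro h
    rw [h] at hpq
    norm_num at hpq
    have h2 : 1 / p' < 1 := by rw [div_lt_one hp0]; exact hp1
    linarith
  have hqp : q' + p' = p' * q' := by
    field_simp at hpq
    linarith
  have hq0 : 0 < q' := by
    by_contra h
    push_neg at h
    nlinarith
  have hq2 : 2 < q' := by nlinarith
  have hαneg : 1 - q' / p' < 0 := by
    have hlt : p' < q' := by linarith
    have : 1 < q' / p' := (one_lt_div hp0).2 hlt
    linarith
  refine ⟨hp0, hq0, hq2, hαneg, hqp, ?_, ?_⟩
  · field_simp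
    ring
  · field_simp
    linarith

include hp1 hp2 hpq in
lemma up_cms :
    IsCMS (fun x : ℝ => ((-(x ^ 2) / 2 : ℝ) : EReal)) p' q'
      (ENNReal.ofReal (-1 / (1 - q' / p'))) 1
      (fun s => (1 + (1 - q' / p') * s) ^ (1 / (1 - q' / p')))
      (fun s => (1 + (1 - q' / p') * s) ^ ((1 - (1 - q' / p')) / (1 - q' / p')))
      (fun s => -((1 + (1 - q' / p') * s) ^ (2 / (1 - q' / p'))) / 2) := by
  obtain ⟨hp0, hq0, hq2, hαneg, hqp, hA1, hB1⟩ := basic_facts hp1 hp2 hpq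
  set α := 1 - q' / p' with hαdef
  clear_value α
  have hαn : α ≠ 0 := hαneg.ne
  have hβ : 0 < -1 / α := div_pos_iff.2 (Or.inr ⟨by norm_num, hαneg⟩)
  have hval : 1 + α * (-1 / α) = 0 := by field_simp; norm_num
  have hone : α * (-1 / α) = -1 := by field_simp
  have hbase : ∀ s : ℝ, s < -1 / α → 0 < 1 + α * s := by
    intro s hs
    have h2 := mul_lt_mul_of_neg_left hs hαneg
    linarith [hone]
  have hIco := icoe_ofReal hβ
  have hd : ∀ r : ℝ, r < -1 / α →
      HasDerivAt (fun s => (1 + α * s) ^ (1 / α)) ((1 + α * r) ^ ((1 - α) / α)) r := by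
    intro r hr
    have h := hasDerivAt_rpow_aff α (1 / α) r (hbase r hr)
    have he : α * (1 / α) * (1 + α * r) ^ (1 / α - 1) = (1 + α * r) ^ ((1 - α) / α) := by
      rw [show (1 - α) / α = 1 / α - 1 by field_simp,
        show α * (1 / α) = 1 by field_simp, one_mul]
    rwa [he] at h
  constructor
  · norm_num
  · simp
  · intro T hsub
    rw [hIco] at hsub
    have hmem : ∀ r ∈ Set.Icc (0:ℝ) T, 0 < 1 + α * r := fun r hr => hbase r (hsub hr).2
    refine ⟨fun t ht => (Real.rpow_pos_of_pos (hmem t ht) _).le, ?_, ?_, ?_⟩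
    · apply ContinuousOn.integrableOn_Icc
      apply ContinuousOn.rpow_const
      · fun_prop
      · exact fun x hx => Or.inl (hmem x hx).ne'
    · intro s hs t ht hst
      have hsubint : Set.uIcc s t ⊆ Set.Icc (0:ℝ) T := by
        rw [Set.uIcc_of_le hst]
        exact fun r hr => ⟨hs.1.trans hr.1, hr.2.trans ht.2⟩
      have hkey : ∫ r in s..t, (1 + α * r) ^ ((1 - α) / α)
          = (1 + α * t) ^ (1 / α) - (1 + α * s) ^ (1 / α) := by
        apply intervalIntegral.integral_eq_sub_of_hasDerivAt
        · exact fun r hr => hd r (hsub (hsubint hr)).2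
        · apply ContinuousOn.intervalIntegrable
          apply ContinuousOn.rpow_const
          · fun_prop
          · exact fun x hx => Or.inl (hmem x (hsubint hx)).ne'
      have hnn : 0 ≤ ∫ r in s..t, (1 + α * r) ^ ((1 - α) / α) :=
        intervalIntegral.integral_nonneg hst fun r hr =>
          (Real.rpow_pos_of_pos (hmem r ⟨hs.1.trans hr.1, hr.2.trans ht.2⟩) _).le
      rw [hkey, Real.dist_eq, abs_of_nonpos (by linarith [hkey ▸ hnn])]
      linarith
    · refine (ae_restrict_iff' measurableSet_Icc).2 (Eventually.of_forall fun r hr => ?_)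
      have h := hasMetricDerivAt_of_deriv (hd r (hsub hr).2)
      rwa [abs_of_pos (Real.rpow_pos_of_pos (hbase r (hsub hr).2) _)] at h
  · rw [hIco]
    intro s hs t ht hst
    have hxs := hbase s hs.2
    have hxt := hbase t ht.2
    have hle : 1 + α * t ≤ 1 + α * s := by nlinarith [mul_le_mul_of_nonpos_left hst hαneg.le]
    have h2 : (1 + α * s) ^ (2 / α) ≤ (1 + α * t) ^ (2 / α) :=
      Real.rpow_le_rpow_of_nonpos hxt hle (by
        apply div_nonpos_of_nonneg_of_nonpos <;> [norm_num; exact hαneg.le])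
    linarith
  · rw [hIco]
    refine (ae_restrict_iff' measurableSet_Ico).2 (Eventually.of_forall fun t ht => ?_)
    have hx := hbase t ht.2
    have hsq : ((1 + α * t) ^ (1 / α)) ^ (2:ℕ) = (1 + α * t) ^ (2 / α) := by
      rw [← Real.rpow_natCast ((1 + α * t) ^ (1 / α)) 2, ← Real.rpow_mul hx.le]
      congr 1
      push_cast
      ring
    rw [EReal.coe_eq_coe_iff, ← hsq]
  · rw [hIco]
    refine (ae_restrict_iff' measurableSet_Ico).2 (Eventually.of_forall fun t ht => ?_)
    have hx := hbase t ht.2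
    refine ⟨-((1 + α * t) ^ (q' / α)), ?_, ?_⟩
    · have h := ((hasDerivAt_rpow_aff α (2 / α) t hx).neg.div_const 2)
      have he : -(α * (2 / α) * (1 + α * t) ^ (2 / α - 1)) / 2
          = -((1 + α * t) ^ (q' / α)) := by
        rw [show α * (2 / α) = 2 by field_simp,
          show 2 / α - 1 = q' / α by rw [← hB1]; field_simp]
        ring
      rw [he] at h
      exact h.hasDerivWithinAt
    · have hup : |(1 + α * t) ^ (1 / α)| = (1 + α * t) ^ (1 / α) :=
        abs_of_pos (Real.rpow_pos_of_pos hx _)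
      have hAbound : slope' (fun x : ℝ => ((-(x ^ 2) / 2 : ℝ) : EReal))
          ((1 + α * t) ^ (1 / α)) ^ q' ≤ ENNReal.ofReal ((1 + α * t) ^ (q' / α)) := by
        have h0 := slope'_le ((1 + α * t) ^ (1 / α))
        rw [hup] at h0
        calc slope' (fun x : ℝ => ((-(x ^ 2) / 2 : ℝ) : EReal))
              ((1 + α * t) ^ (1 / α)) ^ q'
            ≤ (ENNReal.ofReal ((1 + α * t) ^ (1 / α))) ^ q' :=
              ENNReal.rpow_le_rpow h0 hq0.le
          _ = ENNReal.ofReal (((1 + α * t) ^ (1 / α)) ^ q') :=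
              ENNReal.ofReal_rpow_of_pos (Real.rpow_pos_of_pos hx _)
          _ = ENNReal.ofReal ((1 + α * t) ^ (q' / α)) := by
              rw [← Real.rpow_mul hx.le]
              congr 1
              ring
      refine ereal_helper (le_of_lt (one_div_pos.2 hq0)) (Real.rpow_nonneg hx.le _)
        hAbound ?_
      have hdu : ((1 + α * t) ^ ((1 - α) / α)) ^ p' = (1 + α * t) ^ (q' / α) := by
        rw [← Real.rpow_mul hx.le]
        congr 1
        rw [div_mul_eq_mul_div, hA1]
      rw [hdu]
      have hcc : (1 / p' + 1 / q') * ((1 + α * t) ^ (q' / α))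
          = 1 * ((1 + α * t) ^ (q' / α)) := by rw [hpq]
      nlinarith [hcc]

end Case3

lemma blowup {α : ℝ} (hα : α < 0) :
    Tendsto (fun s => dist ((1 + α * s) ^ (1 / α)) ((1 + α * (0:ℝ)) ^ (1 / α)))
      (𝓝[<] (-1 / α)) atTop := by
  have h0 : ((1 + α * (0:ℝ)) ^ (1 / α)) = 1 := by norm_num
  rw [h0]
  refine tendsto_atTop_mono (fun s => ?_)
    (tendsto_atTop_add_const_right _ (-1) (tendsto_up hα))
  rw [Real.dist_eq, ← sub_eq_add_neg]
  exact le_abs_self _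

lemma noext {p' q' α : ℝ} (hα : α < 0) (v dv φv : ℝ → ℝ)
    (hv : IsCMS (fun x : ℝ => ((-(x ^ 2) / 2 : ℝ) : EReal)) p' q' ⊤ 1 v dv φv) :
    ¬ (∀ s : ℝ, 0 ≤ s → s < -1 / α → v s = (1 + α * s) ^ (1 / α)) := by
  intro h
  have hβ : 0 < -1 / α := div_pos_iff.2 (Or.inr ⟨by norm_num, hα⟩)
  set β := -1 / α with hβdef
  obtain ⟨hnn, hint, hdist, -⟩ := hv.ac β (by rw [icoe_top]; exact fun x hx => hx.1)
  have hii : ∀ a b : ℝ, 0 ≤ a → b ≤ β → a ≤ b → IntervalIntegrable dv volume a b := by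
    intro a b ha hb hab
    apply (hint.mono_set ?_).intervalIntegrable
    rw [Set.uIcc_of_le hab]
    exact fun r hr => ⟨ha.trans hr.1, hr.2.trans hb⟩
  set C := ∫ r in (0:ℝ)..β, dv r with hCdef
  have hbound : ∀ s, 0 ≤ s → s < β → dist (v s) (v β) ≤ C := by
    intro s hs0 hsβ
    refine (hdist s ⟨hs0, hsβ.le⟩ β ⟨hβ.le, le_refl _⟩ hsβ.le).trans ?_
    have hsplit : (∫ r in (0:ℝ)..s, dv r) + ∫ r in s..β, dv r = C :=
      intervalIntegral.integral_add_adjacent_intervals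
        (hii 0 s le_rfl (by linarith) hs0) (hii s β hs0 le_rfl hsβ.le)
    have hpos : 0 ≤ ∫ r in (0:ℝ)..s, dv r :=
      intervalIntegral.integral_nonneg hs0 fun r hr =>
        hnn r ⟨hr.1, hr.2.trans hsβ.le⟩
    linarith
  have hev1 := (tendsto_up hα).eventually
    (eventually_gt_atTop (C + dist (v β) 1 + 1))
  have hev2 : ∀ᶠ s in 𝓝[<] β, (0:ℝ) < s :=
    (eventually_gt_nhds hβ).filter_mono nhdsWithin_le_nhds
  obtain ⟨s, hsK, hs0, hsβ⟩ := (hev1.and (hev2.and self_mem_nhdsWithin)).exists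
  have hvs := h s hs0.le hsβ
  have hb := hbound s hs0.le hsβ
  have hd1 : dist (v s) 1 ≤ C + dist (v β) 1 :=
    (dist_triangle (v s) (v β) 1).trans (by linarith)
  have hd2 : (1 + α * s) ^ (1 / α) - 1 ≤ dist (v s) 1 := by
    rw [Real.dist_eq, hvs]
    exact le_abs_self _
  linarith

end Stmt16Aux

open Stmt16Aux in
theorem stmt16 :
    let f : ℝ → EReal := fun x => ((-(x ^ 2) / 2 : ℝ) : EReal)
    PLConvex f 2 (-2) ∧
    (∃ du φ : ℝ → ℝ, IsCMS f 2 2 ⊤ 1 (fun t => Real.exp t) du φ) ∧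
    ∀ p' q' : ℝ, 1 < p' → p' < 2 → 1 / p' + 1 / q' = 1 →
      let α : ℝ := 1 - q' / p'
      let up' : ℝ → ℝ := fun s => (1 + α * s) ^ (1 / α)
      α < 0 ∧
      (∃ du' φ' : ℝ → ℝ, IsCMS f p' q' (ENNReal.ofReal (-1 / α)) 1 up' du' φ') ∧
      Filter.Tendsto (fun s => dist (up' s) (up' 0)) (𝓝[<] (-1 / α)) Filter.atTop ∧
      ∀ (v : ℝ → ℝ) (dv φv : ℝ → ℝ), IsCMS f p' q' ⊤ 1 v dv φv →
        ¬ (∀ s : ℝ, 0 ≤ s → s < -1 / α → v s = up' s) := by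
  intro f
  refine ⟨plconvex, ⟨_, _, exp_cms⟩, ?_⟩
  intro p' q' hp1 hp2 hpq
  intro α up'
  have hfacts := basic_facts hp1 hp2 hpq
  have hαneg : α < 0 := hfacts.2.2.2.1
  refine ⟨hαneg, ⟨_, _, up_cms hp1 hp2 hpq⟩, blowup hαneg, ?_⟩
  intro v dv φv hv
  exact noext hαneg v dv φv hv
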